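/- Let f be a real-rooted real polynomial, let 0 < φ < 1, and suppose b ∈ ℝ is strictly above all roots of f and satisfies Φ^f(b) = f′(b)/f(b) ≤ φ. Then the point b + 1/(1−φ) is strictly above all roots of (1−D)f = f − f′, and Φ^{(1−D)f}(b + 1/(1−φ)) ≤ φ. Consequently, smax_φ((1−D)f) ≤ smax_φ(f) + 1/(1−φ). -/

import Mathlib

open Polynomial

/-- A real polynomial is real-rooted if it splits over `ℝ`
(equivalently, all of its complex roots are real). -/
def RealRooted (p : Polynomial ℝ) : Prop := p.Splits

/-- The upper barrier function `Φ^f(b) = f'(b)/f(b)`. -/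
noncomputable def upperBarrier (f : Polynomial ℝ) (b : ℝ) : ℝ :=
  (Polynomial.derivative f).eval b / f.eval b

/-- The soft spectral upper edge `smax_φ(f) = max {x : Φ^f(x) = φ}`. -/
noncomputable def smax (φ : ℝ) (f : Polynomial ℝ) : ℝ :=
  sSup {x : ℝ | upperBarrier f x = φ}

namespace UBShift

noncomputable def P (R : Multiset ℝ) : Polynomial ℝ := (R.map fun a => X - C a).prod

noncomputable def s1 (R : Multiset ℝ) (x : ℝ) : ℝ := (R.map fun a => (x - a)⁻¹).sum
noncomputable def s2 (R : Multiset ℝ) (x : ℝ) : ℝ := (R.map fun a => ((x - a) ^ 2)⁻¹).sum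

lemma eval_P_pos {R : Multiset ℝ} {x : ℝ} (h : ∀ a ∈ R, a < x) : 0 < (P R).eval x := by
  rw [P, eval_multiset_prod]
  apply Multiset.prod_pos
  intro y hy
  rw [Multiset.mem_map] at hy
  obtain ⟨z, hz, rfl⟩ := hy
  obtain ⟨a, ha, rfl⟩ := Multiset.mem_map.mp hz
  simp only [eval_sub, eval_X, eval_C]
  linarith [h a ha]

lemma eval_derivative_P (x : ℝ) (R : Multiset ℝ) (h : ∀ a ∈ R, a < x) :
    (derivative (P R)).eval x = (P R).eval x * s1 R x := by
  induction R using Multiset.induction_on with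
  | empty => simp [P, s1]
  | cons a R ih =>
    have ha : x - a ≠ 0 := sub_ne_zero.mpr (ne_of_gt (h a (Multiset.mem_cons_self a R)))
    have ih' := ih fun b hb => h b (Multiset.mem_cons_of_mem hb)
    simp only [P, s1, Multiset.map_cons, Multiset.prod_cons, Multiset.sum_cons] at *
    rw [derivative_mul, derivative_sub, derivative_X, derivative_C]
    simp only [eval_add, eval_mul, eval_sub, eval_X, eval_C, sub_zero, one_mul]
    rw [ih']
    field_simp

lemma eval_dd_P (x : ℝ) (R : Multiset ℝ) (h : ∀ a ∈ R, a < x) :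
    (derivative (derivative (P R))).eval x = (P R).eval x * ((s1 R x) ^ 2 - s2 R x) := by
  induction R using Multiset.induction_on with
  | empty => simp [P, s1, s2]
  | cons a R ih =>
    have ha : x - a ≠ 0 := sub_ne_zero.mpr (ne_of_gt (h a (Multiset.mem_cons_self a R)))
    have h' : ∀ b ∈ R, b < x := fun b hb => h b (Multiset.mem_cons_of_mem hb)
    have ih' := ih h'
    have h1 := eval_derivative_P x R h'
    simp only [P, s1, s2, Multiset.map_cons, Multiset.prod_cons, Multiset.sum_cons] at *
    rw [derivative_mul, derivative_sub, derivative_X, derivative_C]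
    simp only [sub_zero, one_mul]
    rw [derivative_add, derivative_mul, derivative_sub, derivative_X, derivative_C]
    simp only [eval_add, eval_mul, eval_sub, eval_X, eval_C, sub_zero, one_mul]
    rw [ih', h1]
    field_simp
    ring

lemma s1_nonneg {R : Multiset ℝ} {x : ℝ} (h : ∀ a ∈ R, a < x) : 0 ≤ s1 R x := by
  apply Multiset.sum_nonneg
  intro y hy
  obtain ⟨a, ha, rfl⟩ := Multiset.mem_map.mp hy
  have h2 : 0 < x - a := by linarith [h a ha]
  positivity

lemma s2_nonneg (R : Multiset ℝ) (x : ℝ) : 0 ≤ s2 R x := by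
  apply Multiset.sum_nonneg
  intro y hy
  obtain ⟨a, ha, rfl⟩ := Multiset.mem_map.mp hy
  positivity

lemma s1_anti {R : Multiset ℝ} {x y : ℝ} (h : ∀ a ∈ R, a < x) (hxy : x ≤ y) :
    s1 R y ≤ s1 R x := by
  apply Multiset.sum_map_le_sum_map
  intro a ha
  have h1 : 0 < x - a := by linarith [h a ha]
  gcongr

lemma s1_strict {R : Multiset ℝ} (hR : R ≠ 0) {x y : ℝ} (h : ∀ a ∈ R, a < x)
    (hxy : x < y) : s1 R y < s1 R x := by
  obtain ⟨a0, ha0⟩ := Multiset.exists_mem_of_ne_zero hR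
  obtain ⟨R', rfl⟩ := Multiset.exists_cons_of_mem ha0
  have ha0x := h a0 (Multiset.mem_cons_self a0 R')
  have h1 : (y - a0)⁻¹ < (x - a0)⁻¹ := by
    have h2 : 0 < x - a0 := by linarith
    have h3 : x - a0 < y - a0 := by linarith
    exact inv_strictAnti₀ h2 h3
  have h2 : s1 R' y ≤ s1 R' x :=
    s1_anti (fun a ha => h a (Multiset.mem_cons_of_mem ha)) hxy.le
  simp only [s1, Multiset.map_cons, Multiset.sum_cons] at *
  linarith

lemma s1_single_le {R : Multiset ℝ} {x : ℝ} (h : ∀ a ∈ R, a < x) {a0 : ℝ} (ha0 : a0 ∈ R) :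
    (x - a0)⁻¹ ≤ s1 R x := by
  apply Multiset.single_le_sum
  · intro y hy
    obtain ⟨a, ha, rfl⟩ := Multiset.mem_map.mp hy
    have h2 : 0 < x - a := by linarith [h a ha]
    positivity
  · exact Multiset.mem_map_of_mem _ ha0

lemma s2_key {R : Multiset ℝ} {x y : ℝ} (h : ∀ a ∈ R, a < x) (hxy : x ≤ y) :
    (y - x) * s2 R y ≤ s1 R x - s1 R y := by
  have key : ((R.map fun a => (y - x) * ((y - a) ^ 2)⁻¹).sum : ℝ)
      ≤ (R.map fun a => (x - a)⁻¹ - (y - a)⁻¹).sum := by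
    apply Multiset.sum_map_le_sum_map
    intro a ha
    have hax : 0 < x - a := by linarith [h a ha]
    have hay : 0 < y - a := by linarith [h a ha]
    have expand : (x - a)⁻¹ - (y - a)⁻¹ = (y - x) * ((x - a) * (y - a))⁻¹ := by
      field_simp
      ring
    rw [expand]
    have h5 : ((y - a) ^ 2)⁻¹ ≤ ((x - a) * (y - a))⁻¹ := by
      apply inv_anti₀ (by positivity)
      nlinarith
    have h6 : 0 ≤ y - x := by linarith
    exact mul_le_mul_of_nonneg_left h5 h6
  rw [Multiset.sum_map_mul_left] at key
  rw [Multiset.sum_map_sub] at key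
  exact key

lemma core_le {φ s1b s1x s2x d : ℝ} (hφ1 : φ < 1)
    (h1 : s1x ≤ s1b) (h2 : s1b ≤ φ) (h3 : 0 ≤ s2x)
    (h4 : d * s2x ≤ s1b - s1x) (h5 : 1 / (1 - φ) ≤ d) :
    (s1x - s1x ^ 2 + s2x) / (1 - s1x) ≤ φ := by
  have h1φ : 0 < 1 - φ := by linarith
  have hs1x1 : 0 < 1 - s1x := by linarith
  have hd : 1 ≤ d * (1 - φ) := by
    rw [div_le_iff₀ h1φ] at h5
    linarith
  rw [div_le_iff₀ hs1x1]
  have e1 : s2x ≤ s2x * (d * (1 - φ)) := le_mul_of_one_le_right h3 hd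
  have e3 : (d * s2x) * (1 - φ) ≤ (s1b - s1x) * (1 - φ) :=
    mul_le_mul_of_nonneg_right h4 h1φ.le
  have e4 : (s1b - s1x) * (1 - φ) ≤ (φ - s1x) * (1 - φ) := by nlinarith
  have e5 : (φ - s1x) * (1 - φ) ≤ (φ - s1x) * (1 - s1x) := by nlinarith
  nlinarith

lemma core_lt {φ s1b s1x s2x d : ℝ} (hφ1 : φ < 1)
    (h1' : s1x < φ) (h2 : s1b ≤ φ) (h3 : 0 ≤ s2x)
    (h4 : d * s2x ≤ s1b - s1x) (h5 : 1 / (1 - φ) ≤ d) :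
    (s1x - s1x ^ 2 + s2x) / (1 - s1x) < φ := by
  have h1φ : 0 < 1 - φ := by linarith
  have hs1x1 : 0 < 1 - s1x := by linarith
  have hd : 1 ≤ d * (1 - φ) := by
    rw [div_le_iff₀ h1φ] at h5
    linarith
  rw [div_lt_iff₀ hs1x1]
  have e1 : s2x ≤ s2x * (d * (1 - φ)) := le_mul_of_one_le_right h3 hd
  have e3 : (d * s2x) * (1 - φ) ≤ (s1b - s1x) * (1 - φ) :=
    mul_le_mul_of_nonneg_right h4 h1φ.le
  have e4 : (s1b - s1x) * (1 - φ) ≤ (φ - s1x) * (1 - φ) := by nlinarith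
  have e5 : (φ - s1x) * (1 - φ) < (φ - s1x) * (1 - s1x) := by nlinarith
  nlinarith

lemma shift_main {c : ℝ} (hc : c ≠ 0) (R : Multiset ℝ)
    {φ : ℝ} (hφ1 : φ < 1) {b : ℝ} (hb : ∀ a ∈ R, a < b)
    (hΦ : s1 R b ≤ φ) {f : Polynomial ℝ} (hfac : f = C c * P R) :
    (∀ y, b ≤ y → (f - derivative f).eval y ≠ 0) ∧
    (∀ y, b ≤ y → upperBarrier (f - derivative f) y
        = (s1 R y - (s1 R y) ^ 2 + s2 R y) / (1 - s1 R y)) ∧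
    (∀ y, b + 1 / (1 - φ) ≤ y → upperBarrier (f - derivative f) y ≤ φ) ∧
    (∀ y, R ≠ 0 → b + 1 / (1 - φ) < y → upperBarrier (f - derivative f) y < φ) := by
  have h1φ : 0 < 1 - φ := by linarith
  have hby : ∀ y, b ≤ y → ∀ a ∈ R, a < y := fun y hy a ha => lt_of_lt_of_le (hb a ha) hy
  have hs1le : ∀ y, b ≤ y → s1 R y ≤ φ := fun y hy => (s1_anti hb hy).trans hΦ
  have hcp : ∀ y, b ≤ y → c * (P R).eval y ≠ 0 := fun y hy =>
    mul_ne_zero hc (ne_of_gt (eval_P_pos (hby y hy)))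
  have hge : ∀ y, b ≤ y →
      (f - derivative f).eval y = (c * (P R).eval y) * (1 - s1 R y) := by
    intro y hy
    rw [hfac, derivative_C_mul]
    simp only [eval_sub, eval_mul, eval_C]
    rw [eval_derivative_P y R (hby y hy)]
    ring
  have hne : ∀ y, b ≤ y → (f - derivative f).eval y ≠ 0 := by
    intro y hy
    rw [hge y hy]
    exact mul_ne_zero (hcp y hy) (by have := hs1le y hy; intro h; nlinarith [sub_eq_zero.mp h])
  have hform : ∀ y, b ≤ y → upperBarrier (f - derivative f) y
      = (s1 R y - (s1 R y) ^ 2 + s2 R y) / (1 - s1 R y) := by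
    intro y hy
    have hnum : (derivative (f - derivative f)).eval y
        = (c * (P R).eval y) * (s1 R y - (s1 R y) ^ 2 + s2 R y) := by
      rw [derivative_sub, hfac, derivative_C_mul, derivative_C_mul]
      simp only [eval_sub, eval_mul, eval_C]
      rw [eval_derivative_P y R (hby y hy), eval_dd_P y R (hby y hy)]
      ring
    rw [upperBarrier, hnum, hge y hy,
      mul_div_mul_left _ _ (hcp y hy)]
  refine ⟨hne, hform, ?_, ?_⟩
  · intro y hy
    have hby' : b ≤ y := by
      have : 0 < 1 / (1 - φ) := by positivity
      linarith
    rw [hform y hby']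
    exact core_le hφ1 (hs1le y hby' |>.trans_eq rfl |>.trans (le_refl φ) |> fun _ => s1_anti hb hby') hΦ
      (s2_nonneg R y) (s2_key hb hby') (by linarith)
  · intro y hR hy
    have hby' : b < y := by
      have : 0 < 1 / (1 - φ) := by positivity
      linarith
    rw [hform y hby'.le]
    exact core_lt hφ1 (lt_of_lt_of_le (s1_strict hR hb hby') hΦ) hΦ
      (s2_nonneg R y) (s2_key hb hby'.le) (by linarith)

end UBShift
theorem upper_barrier_shift
    (f : Polynomial ℝ) (hf : RealRooted f) (hdeg : 0 < f.natDegree)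
    (φ : ℝ) (hφ0 : 0 < φ) (hφ1 : φ < 1)
    (b : ℝ) (hb : ∀ x ∈ f.roots, x < b) (hΦ : upperBarrier f b ≤ φ) :
    (∀ x ∈ (f - Polynomial.derivative f).roots, x < b + 1 / (1 - φ)) ∧
    upperBarrier (f - Polynomial.derivative f) (b + 1 / (1 - φ)) ≤ φ ∧
    smax φ (f - Polynomial.derivative f) ≤ smax φ f + 1 / (1 - φ) := by
  open UBShift in
  have h1φ : 0 < 1 - φ := by linarith
  have hδ : 0 < 1 / (1 - φ) := by positivity
  have hf0 : f ≠ 0 := fun h => by simp [h] at hdeg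
  set c : ℝ := f.leadingCoeff with hcdef
  set R : Multiset ℝ := f.roots with hRdef
  have hc : c ≠ 0 := leadingCoeff_ne_zero.mpr hf0
  have hfac : f = C c * UBShift.P R := Splits.eq_prod_roots hf
  have hcard : R.card = f.natDegree := (splits_iff_card_roots).mp hf
  have hR : R ≠ 0 := by
    intro h
    rw [h, Multiset.card_zero] at hcard
    omega
  -- evaluation facts above the roots
  have hval : ∀ y : ℝ, (∀ a ∈ R, a < y) →
      f.eval y ≠ 0 ∧ upperBarrier f y = UBShift.s1 R y := by
    intro y hy
    have hP : 0 < (UBShift.P R).eval y := eval_P_pos hy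
    have hfe : f.eval y = c * (UBShift.P R).eval y := by rw [hfac]; simp
    have hne : f.eval y ≠ 0 := by rw [hfe]; exact mul_ne_zero hc (ne_of_gt hP)
    refine ⟨hne, ?_⟩
    rw [upperBarrier, hfe, hfac, derivative_C_mul]
    simp only [eval_mul, eval_C]
    rw [eval_derivative_P y R hy]
    have hrw : c * ((UBShift.P R).eval y * UBShift.s1 R y)
        = (c * (UBShift.P R).eval y) * UBShift.s1 R y := by ring
    rw [hrw, mul_div_cancel_left₀ _ (mul_ne_zero hc (ne_of_gt hP))]
  have hs1b : UBShift.s1 R b ≤ φ := by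
    rw [← (hval b hb).2]; exact hΦ
  -- the shift lemma at base point b
  obtain ⟨b1, b2, b3, b4⟩ := shift_main hc R hφ1 hb hs1b hfac
  have hg0 : f - derivative f ≠ 0 := fun h => b1 b le_rfl (by rw [h]; simp)
  constructor
  · -- part 1
    intro x hx
    rw [mem_roots'] at hx
    by_contra hxb
    push_neg at hxb
    have hbx : b ≤ x := by linarith
    exact b1 x hbx hx.2
  constructor
  · -- part 2
    exact b3 _ le_rfl
  · -- part 3
    -- the largest root
    obtain ⟨a0, ha0⟩ := Multiset.exists_mem_of_ne_zero hR
    have htne : R.toFinset.Nonempty := ⟨a0, Multiset.mem_toFinset.mpr ha0⟩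
    set l : ℝ := R.toFinset.max' htne with hldef
    have hlR : l ∈ R := Multiset.mem_toFinset.mp (R.toFinset.max'_mem htne)
    have hlmax : ∀ a ∈ R, a ≤ l := fun a ha => R.toFinset.le_max' a (Multiset.mem_toFinset.mpr ha)
    have hlb : l < b := hb l hlR
    set y0 : ℝ := l + min ((b - l) / 2) (1 / (1 + φ)) with hy0def
    have hy0l : l < y0 := by
      have : 0 < min ((b - l) / 2) (1 / (1 + φ)) :=
        lt_min (by linarith) (by positivity)
      rw [hy0def]
      linarith
    have hy0b : y0 ≤ b := by
      have := min_le_left ((b - l) / 2) (1 / (1 + φ))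
      rw [hy0def]
      linarith
    have hrootsy : ∀ y : ℝ, y0 ≤ y → ∀ a ∈ R, a < y :=
      fun y hy a ha => lt_of_le_of_lt (hlmax a ha) (lt_of_lt_of_le hy0l hy)
    -- the level set of f
    set A : Set ℝ := {x : ℝ | upperBarrier f x = φ} with hAdef
    have hAval : ∀ t ∈ A, f.eval t ≠ 0 ∧ (derivative f).eval t = φ * f.eval t := by
      intro t ht
      have ht' : upperBarrier f t = φ := ht
      have hfne : f.eval t ≠ 0 := by
        intro h0
        rw [upperBarrier, h0, div_zero] at ht'
        exact absurd ht'.symm (ne_of_gt hφ0)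
      exact ⟨hfne, by rw [upperBarrier, div_eq_iff hfne] at ht'; exact ht'⟩
    have hAfin : A.Finite := by
      have hdlt : (derivative f).natDegree < f.natDegree :=
        natDegree_derivative_lt (by omega)
      set q : Polynomial ℝ := derivative f - C φ * f with hqdef
      have hqc : q.coeff f.natDegree = -(φ * c) := by
        rw [hqdef, coeff_sub, coeff_C_mul, coeff_eq_zero_of_natDegree_lt hdlt,
          coeff_natDegree]
        ring
      have hq0 : q ≠ 0 := by
        intro h
        rw [h, coeff_zero] at hqc
        have hφc : φ * c = 0 := by linarith
        rcases mul_eq_zero.mp hφc with h' | h'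
        · exact absurd h' (ne_of_gt hφ0)
        · exact hc h'
      apply (Polynomial.finite_setOf_isRoot hq0).subset
      intro t ht
      obtain ⟨h1, h2⟩ := hAval t ht
      show q.eval t = 0
      rw [hqdef]
      simp only [eval_sub, eval_mul, eval_C]
      rw [h2]; ring
    -- A is nonempty via IVT
    have hcont : ContinuousOn (fun y => (derivative f).eval y / f.eval y) (Set.Icc y0 b) := by
      apply ContinuousOn.div
      · exact (Polynomial.continuous _).continuousOn
      · exact (Polynomial.continuous _).continuousOn
      · intro y hy
        exact (hval y (hrootsy y hy.1)).1
    have hy0val : φ ≤ (derivative f).eval y0 / f.eval y0 := by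
      have h1 : upperBarrier f y0 = UBShift.s1 R y0 := (hval y0 (hrootsy y0 le_rfl)).2
      have h2 : (y0 - l)⁻¹ ≤ UBShift.s1 R y0 := s1_single_le (hrootsy y0 le_rfl) hlR
      have h3 : y0 - l ≤ 1 / (1 + φ) := by
        have := min_le_right ((b - l) / 2) (1 / (1 + φ))
        rw [hy0def]
        linarith
      have h4 : 0 < y0 - l := by linarith
      have h5 : 1 + φ ≤ (y0 - l)⁻¹ := by
        rw [← inv_inv (1 + φ)]
        exact inv_anti₀ h4 (by rw [inv_eq_one_div]; exact h3)
      show φ ≤ upperBarrier f y0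
      rw [h1]
      linarith
    have hbval : (derivative f).eval b / f.eval b ≤ φ := hΦ
    obtain ⟨t, htmem, htval⟩ :=
      intermediate_value_Icc' hy0b hcont (Set.mem_Icc.mpr ⟨hbval, hy0val⟩)
    have htA : t ∈ A := htval
    -- the sup of A
    have hsA : sSup A ∈ A := Set.Nonempty.csSup_mem ⟨t, htA⟩ hAfin
    set s : ℝ := sSup A with hsdef
    have hts : t ≤ s := le_csSup hAfin.bddAbove htA
    have hy0t : y0 ≤ t := htmem.1
    have hrootss : ∀ a ∈ R, a < s := fun a ha => hrootsy s (hy0t.trans hts) a ha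
    have hrootst : ∀ a ∈ R, a < t := fun a ha => hrootsy t hy0t a ha
    have hs1s : UBShift.s1 R s = φ := by rw [← (hval s hrootss).2]; exact hsA
    have hs1t : UBShift.s1 R t = φ := by rw [← (hval t hrootst).2]; exact htA
    -- shift lemma at s and t
    obtain ⟨s1c, s2c, s3c, s4c⟩ := shift_main hc R hφ1 hrootss (le_of_eq hs1s) hfac
    obtain ⟨t1c, t2c, t3c, t4c⟩ := shift_main hc R hφ1 hrootst (le_of_eq hs1t) hfac
    set g : Polynomial ℝ := f - derivative f with hgdef
    set B : Set ℝ := {x : ℝ | upperBarrier g x = φ} with hBdef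
    -- all elements of B are at most s + 1/(1-φ)
    have hBub : ∀ u ∈ B, u ≤ s + 1 / (1 - φ) := by
      intro u hu
      by_contra hcon
      push_neg at hcon
      have := s4c u hR hcon
      exact absurd hu (ne_of_lt this)
    -- B is nonempty via IVT
    have htsδ : t ≤ s + 1 / (1 - φ) := by linarith
    have hcont2 : ContinuousOn (fun y => (derivative g).eval y / g.eval y)
        (Set.Icc t (s + 1 / (1 - φ))) := by
      apply ContinuousOn.div
      · exact (Polynomial.continuous _).continuousOn
      · exact (Polynomial.continuous _).continuousOn
      · intro y hy
        exact t1c y hy.1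
    have hgt : φ ≤ (derivative g).eval t / g.eval t := by
      show φ ≤ upperBarrier g t
      rw [t2c t le_rfl, hs1t]
      rw [le_div_iff₀ (by linarith)]
      nlinarith [s2_nonneg R t]
    have hgs : (derivative g).eval (s + 1 / (1 - φ)) / g.eval (s + 1 / (1 - φ)) ≤ φ :=
      s3c _ le_rfl
    obtain ⟨u, humem, huval⟩ :=
      intermediate_value_Icc' htsδ hcont2 (Set.mem_Icc.mpr ⟨hgs, hgt⟩)
    have huB : u ∈ B := huval
    show sSup B ≤ sSup A + 1 / (1 - φ)
    exact csSup_le ⟨u, huB⟩ hBub
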